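/- Let G be a complete bipartite graph K_{n,n} with real edge weights, and for k = 0,1,...,n let ω_k denote the maximal total weight of a matching of cardinality k (with ω_0 = 0). Then the sequence (ω_k) is concave: for every 1 ≤ k ≤ n−1, ω_k ≥ (ω_{k−1} + ω_{k+1})/2. -/

import Mathlib

def IsMatching (n : ℕ) (M : Finset (Fin n × Fin n)) : Prop :=
  ∀ e ∈ M, ∀ f ∈ M, e ≠ f → e.1 ≠ f.1 ∧ e.2 ≠ f.2

noncomputable def wSum (n : ℕ) (w : Fin n → Fin n → ℝ) (S : Finset (Fin n × Fin n)) : ℝ :=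
  ∑ e ∈ S, w e.1 e.2

noncomputable def maxAssign (n : ℕ) (w : Fin n → Fin n → ℝ) (k : ℕ) : ℝ :=
  sSup {x : ℝ | ∃ M : Finset (Fin n × Fin n), IsMatching n M ∧ M.card = k ∧ wSum n w M = x}

def IsAugmentingPath (n : ℕ) (M p : Finset (Fin n × Fin n)) : Prop :=
  ∃ (t : ℕ) (u v : ℕ → Fin n),
    (∀ i ≤ t, ∀ j ≤ t, u i = u j → i = j) ∧
    (∀ i ≤ t, ∀ j ≤ t, v i = v j → i = j) ∧
    (∀ i ≤ t, (u i, v i) ∉ M) ∧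
    (∀ i < t, (u (i + 1), v i) ∈ M) ∧
    (∀ e ∈ M, e.1 ≠ u 0) ∧
    (∀ e ∈ M, e.2 ≠ v t) ∧
    p = ((Finset.range (t + 1)).image fun i => (u i, v i)) ∪
        ((Finset.range t).image fun i => (u (i + 1), v i))

namespace Stmt1Aux

lemma matching_subset {n : ℕ} {M S : Finset (Fin n × Fin n)} (h : IsMatching n M)
    (hs : S ⊆ M) : IsMatching n S :=
  fun e he f hf hne => h e (hs he) f (hs hf) hne

lemma matching_eq_of_fst {n : ℕ} {M : Finset (Fin n × Fin n)} (h : IsMatching n M)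
    {e f : Fin n × Fin n} (he : e ∈ M) (hf : f ∈ M) (hef : e.1 = f.1) : e = f := by
  by_contra hne
  exact (h e he f hf hne).1 hef

lemma matching_eq_of_snd {n : ℕ} {M : Finset (Fin n × Fin n)} (h : IsMatching n M)
    {e f : Fin n × Fin n} (he : e ∈ M) (hf : f ∈ M) (hef : e.2 = f.2) : e = f := by
  by_contra hne
  exact (h e he f hf hne).2 hef

lemma matching_insert {n : ℕ} {M : Finset (Fin n × Fin n)} (hM : IsMatching n M)
    {e : Fin n × Fin n} (h1 : ∀ g ∈ M, g.1 ≠ e.1) (h2 : ∀ g ∈ M, g.2 ≠ e.2) :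
    IsMatching n (insert e M) := by
  intro x hx y hy hxy
  rcases Finset.mem_insert.1 hx with h | h <;>
    rcases Finset.mem_insert.1 hy with h' | h'
  · exact absurd (h.trans h'.symm) hxy
  · subst h; exact ⟨fun hc => h1 y h' hc.symm, fun hc => h2 y h' hc.symm⟩
  · subst h'; exact ⟨h1 x h, h2 x h⟩
  · exact hM x h y h' hxy

/-- The key exchange lemma: matchings of sizes differing by 2 can be rebalanced into
two matchings of the intermediate size, preserving the multiset of edges. -/
lemma exchange {n : ℕ} : ∀ m : ℕ, ∀ A B : Finset (Fin n × Fin n), A.card = m →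
    IsMatching n A → IsMatching n B → B.card = A.card + 2 →
    ∃ C D : Finset (Fin n × Fin n), IsMatching n C ∧ IsMatching n D ∧
      C.card = A.card + 1 ∧ D.card = A.card + 1 ∧ C.val + D.val = A.val + B.val := by
  intro m
  induction m using Nat.strong_induction_on with
  | _ m ih =>
    intro A B hAm hA hB hcard
    -- find an edge e₀ ∈ B whose left endpoint is not covered by A
    have hcards : (A.image Prod.fst).card < (B.image Prod.fst).card := by
      rw [Finset.card_image_of_injOn, Finset.card_image_of_injOn]
      · omega
      · intro e he f hf hef; exact matching_eq_of_fst hB he hf hef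
      · intro e he f hf hef; exact matching_eq_of_fst hA he hf hef
    have hu0 : ∃ u₀ ∈ B.image Prod.fst, u₀ ∉ A.image Prod.fst := by
      by_contra hcon
      push_neg at hcon
      exact absurd (Finset.card_le_card hcon) (not_le.2 hcards)
    obtain ⟨u₀, hu₀B, hu₀A⟩ := hu0
    obtain ⟨e₀, he₀B, he₀1⟩ := Finset.mem_image.1 hu₀B
    have hfreeA : ∀ g ∈ A, g.1 ≠ e₀.1 := by
      intro g hg hcon
      exact hu₀A (Finset.mem_image.2 ⟨g, hg, by rw [hcon, he₀1]⟩)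
    by_cases hv : ∃ a ∈ A, a.2 = e₀.2
    · -- the right endpoint of e₀ is covered by A via edge a : recurse
      obtain ⟨a, haA, hav⟩ := hv
      have haB : a ∉ B := by
        intro hcon
        have : a = e₀ := matching_eq_of_snd hB hcon he₀B hav
        exact hfreeA a haA (by rw [this])
      have he₀A : e₀ ∉ A := fun hcon => hfreeA e₀ hcon rfl
      set A' := A.erase a with hA'def
      set B' := B.erase e₀ with hB'def
      have hApos : 1 ≤ A.card := Finset.card_pos.2 ⟨a, haA⟩
      have hA'card : A'.card = A.card - 1 := Finset.card_erase_of_mem haA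
      have hB'card : B'.card = A'.card + 2 := by
        rw [Finset.card_erase_of_mem he₀B, hA'card]; omega
      obtain ⟨X, Y, hX, hY, hXcard, hYcard, hXYsum⟩ :=
        ih (A.card - 1) (by omega) A' B' (by omega)
          (matching_subset hA (Finset.erase_subset _ _))
          (matching_subset hB (Finset.erase_subset _ _)) hB'card
      -- membership transfer
      have hmem : ∀ e : Fin n × Fin n, (e ∈ X ∨ e ∈ Y) → e ∈ A' ∨ e ∈ B' := by
        intro e he
        have : e ∈ X.val + Y.val := by
          rcases he with h | h
          · exact Multiset.mem_add.2 (Or.inl h)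
          · exact Multiset.mem_add.2 (Or.inr h)
        rw [hXYsum] at this
        rcases Multiset.mem_add.1 this with h | h
        · exact Or.inl h
        · exact Or.inr h
      -- e₀.1 and e₀.2 are not covered in X nor Y
      have hfree1 : ∀ e : Fin n × Fin n, (e ∈ X ∨ e ∈ Y) → e.1 ≠ e₀.1 := by
        intro e he hcon
        rcases hmem e he with h | h
        · exact hfreeA e (Finset.mem_of_mem_erase h) hcon
        · have heB : e ∈ B := Finset.mem_of_mem_erase h
          have : e = e₀ := matching_eq_of_fst hB heB he₀B hcon
          exact (Finset.ne_of_mem_erase h) this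
      have hfree2 : ∀ e : Fin n × Fin n, (e ∈ X ∨ e ∈ Y) → e.2 ≠ e₀.2 := by
        intro e he hcon
        rcases hmem e he with h | h
        · have heA : e ∈ A := Finset.mem_of_mem_erase h
          have : e = a := matching_eq_of_snd hA heA haA (by rw [hcon, hav])
          exact (Finset.ne_of_mem_erase h) this
        · have heB : e ∈ B := Finset.mem_of_mem_erase h
          have : e = e₀ := matching_eq_of_snd hB heB he₀B hcon
          exact (Finset.ne_of_mem_erase h) this
      -- a.1 is not covered in both X and Y simultaneously
      have hnodupA' : ∀ b : Fin n × Fin n, Multiset.count b A'.val = 0 ∨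
          Multiset.count b A'.val ≤ 1 := fun b => Or.inr (Multiset.nodup_iff_count_le_one.1 A'.nodup b)
      have ha1 : ¬ ((∃ c ∈ X, c.1 = a.1) ∧ (∃ d ∈ Y, d.1 = a.1)) := by
        rintro ⟨⟨c, hcX, hc1⟩, ⟨d, hdY, hd1⟩⟩
        -- c and d are both in B' (can't be in A'), hence equal
        have hcB' : c ∈ B' := by
          rcases hmem c (Or.inl hcX) with h | h
          · exact absurd (matching_eq_of_fst hA (Finset.mem_of_mem_erase h) haA hc1)
              (Finset.ne_of_mem_erase h)
          · exact h
        have hdB' : d ∈ B' := by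
          rcases hmem d (Or.inr hdY) with h | h
          · exact absurd (matching_eq_of_fst hA (Finset.mem_of_mem_erase h) haA hd1)
              (Finset.ne_of_mem_erase h)
          · exact h
        have hcd : c = d := matching_eq_of_fst hB (Finset.mem_of_mem_erase hcB')
          (Finset.mem_of_mem_erase hdB') (by rw [hc1, hd1])
        subst hcd
        -- c has multiplicity ≥ 2 in X.val + Y.val but ≤ 1 in A'.val + B'.val
        have h2 : 2 ≤ Multiset.count c (X.val + Y.val) := by
          rw [Multiset.count_add]
          have h1 := Multiset.one_le_count_iff_mem.2 (by exact hcX : c ∈ X.val)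
          have h2 := Multiset.one_le_count_iff_mem.2 (by exact hdY : c ∈ Y.val)
          omega
        rw [hXYsum, Multiset.count_add] at h2
        have hcA' : c ∉ A'.val := by
          intro hcon
          exact absurd (matching_eq_of_fst hA (Finset.mem_of_mem_erase hcon) haA hc1)
            (Finset.ne_of_mem_erase hcon)
        rw [Multiset.count_eq_zero.2 hcA'] at h2
        have := Multiset.nodup_iff_count_le_one.1 B'.nodup c
        omega
      -- main construction, symmetric in X/Y
      have main : ∀ X Y : Finset (Fin n × Fin n), IsMatching n X → IsMatching n Y →
          X.card = A.card → Y.card = A.card → X.val + Y.val = A'.val + B'.val →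
          (∀ e ∈ X, e ∈ A' ∨ e ∈ B') → (∀ e ∈ Y, e ∈ A' ∨ e ∈ B') →
          (∀ e ∈ X, e.1 ≠ e₀.1) → (∀ e ∈ Y, e.1 ≠ e₀.1) →
          (∀ e ∈ X, e.2 ≠ e₀.2) → (∀ e ∈ Y, e.2 ≠ e₀.2) →
          (∀ e ∈ Y, e.1 ≠ a.1) →
          ∃ C D : Finset (Fin n × Fin n), IsMatching n C ∧ IsMatching n D ∧
            C.card = A.card + 1 ∧ D.card = A.card + 1 ∧ C.val + D.val = A.val + B.val := by
        clear hmem hfree1 hfree2 ha1 hX hY hXcard hYcard hXYsum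
        intro X Y hX hY hXcard hYcard hXYsum _ hYmem hXf1 hYf1 hXf2 hYf2 hYa1
        refine ⟨insert e₀ X, insert a Y, ?_, ?_, ?_, ?_, ?_⟩
        · exact matching_insert hX hXf1 hXf2
        · refine matching_insert hY hYa1 ?_
          intro g hg hcon
          exact hYf2 g hg (by rw [hcon, hav])
        · rw [Finset.card_insert_of_notMem (fun hcon => hXf1 e₀ hcon rfl), hXcard]
        · rw [Finset.card_insert_of_notMem (fun hcon => hYa1 a hcon rfl), hYcard]
        · rw [Finset.insert_val_of_notMem (fun hcon => hXf1 e₀ hcon rfl),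
            Finset.insert_val_of_notMem (fun hcon => hYa1 a hcon rfl)]
          have hAval : a ::ₘ A'.val = A.val := by
            rw [hA'def, Finset.erase_val]; exact Multiset.cons_erase haA
          have hBval : e₀ ::ₘ B'.val = B.val := by
            rw [hB'def, Finset.erase_val]; exact Multiset.cons_erase he₀B
          calc e₀ ::ₘ X.val + a ::ₘ Y.val
              = a ::ₘ (e₀ ::ₘ (X.val + Y.val)) := by
                rw [Multiset.cons_add, Multiset.add_cons, Multiset.cons_swap]
            _ = a ::ₘ (e₀ ::ₘ (A'.val + B'.val)) := by rw [hXYsum]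
            _ = (a ::ₘ A'.val) + (e₀ ::ₘ B'.val) := by
                rw [Multiset.cons_add, Multiset.add_cons]
            _ = A.val + B.val := by rw [hAval, hBval]
      rcases not_and_or.1 ha1 with h | h
      · push_neg at h
        exact main Y X hY hX (by omega) (by omega)
          (by rw [add_comm]; exact hXYsum)
          (fun e he => hmem e (Or.inr he)) (fun e he => hmem e (Or.inl he))
          (fun e he => hfree1 e (Or.inr he)) (fun e he => hfree1 e (Or.inl he))
          (fun e he => hfree2 e (Or.inr he)) (fun e he => hfree2 e (Or.inl he))
          (fun e he hcon => h e he hcon)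
      · push_neg at h
        exact main X Y hX hY (by omega) (by omega) hXYsum
          (fun e he => hmem e (Or.inl he)) (fun e he => hmem e (Or.inr he))
          (fun e he => hfree1 e (Or.inl he)) (fun e he => hfree1 e (Or.inr he))
          (fun e he => hfree2 e (Or.inl he)) (fun e he => hfree2 e (Or.inr he))
          (fun e he hcon => h e he hcon)
    · -- right endpoint of e₀ is free in A: just move e₀ from B to A
      push_neg at hv
      refine ⟨insert e₀ A, B.erase e₀, ?_, matching_subset hB (Finset.erase_subset _ _),
        ?_, ?_, ?_⟩
      · exact matching_insert hA hfreeA hv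
      · rw [Finset.card_insert_of_notMem (fun hcon => hfreeA e₀ hcon rfl)]
      · rw [Finset.card_erase_of_mem he₀B]; omega
      · rw [Finset.insert_val_of_notMem (fun hcon => hfreeA e₀ hcon rfl),
          Finset.erase_val, Multiset.cons_add, ← Multiset.add_cons,
          Multiset.cons_erase he₀B]

/-- weight version of exchange -/
lemma wsum_of_val_eq {n : ℕ} (w : Fin n → Fin n → ℝ) {C D A B : Finset (Fin n × Fin n)}
    (h : C.val + D.val = A.val + B.val) :
    wSum n w C + wSum n w D = wSum n w A + wSum n w B := by
  unfold wSum
  rw [Finset.sum_eq_multiset_sum, Finset.sum_eq_multiset_sum, Finset.sum_eq_multiset_sum,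
    Finset.sum_eq_multiset_sum, ← Multiset.sum_add, ← Multiset.sum_add,
    ← Multiset.map_add, ← Multiset.map_add, h]

def mset (n : ℕ) (w : Fin n → Fin n → ℝ) (k : ℕ) : Set ℝ :=
  {x : ℝ | ∃ M : Finset (Fin n × Fin n), IsMatching n M ∧ M.card = k ∧ wSum n w M = x}

lemma maxAssign_eq (n : ℕ) (w : Fin n → Fin n → ℝ) (k : ℕ) :
    maxAssign n w k = sSup (mset n w k) := rfl

lemma mset_bddAbove (n : ℕ) (w : Fin n → Fin n → ℝ) (k : ℕ) : BddAbove (mset n w k) := by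
  have hsub : mset n w k ⊆
      ↑((Finset.univ : Finset (Finset (Fin n × Fin n))).image (wSum n w)) := by
    rintro x ⟨M, _, _, rfl⟩
    simp only [Finset.coe_image, Set.mem_image, Finset.mem_coe]
    exact ⟨M, by simp, rfl⟩
  exact (Finset.finite_toSet _).subset hsub |>.bddAbove

lemma mset_nonempty (n : ℕ) (w : Fin n → Fin n → ℝ) {k : ℕ} (hk : k ≤ n) :
    (mset n w k).Nonempty := by
  set M : Finset (Fin n × Fin n) :=
    (Finset.univ : Finset (Fin k)).map
      ⟨fun i => (Fin.castLE hk i, Fin.castLE hk i), by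
        intro i j hij
        exact Fin.castLE_injective hk (congrArg Prod.fst hij)⟩ with hMdef
  refine ⟨wSum n w M, M, ?_, ?_, rfl⟩
  · intro e he f hf hef
    simp only [hMdef, Finset.mem_map, Function.Embedding.coeFn_mk] at he hf
    obtain ⟨i, _, rfl⟩ := he
    obtain ⟨j, _, rfl⟩ := hf
    have : i ≠ j := fun hcon => hef (by rw [hcon])
    constructor <;> exact fun hcon => this (Fin.castLE_injective hk hcon)
  · rw [hMdef, Finset.card_map, Finset.card_univ, Fintype.card_fin]

lemma wSum_le_maxAssign {n : ℕ} (w : Fin n → Fin n → ℝ) {M : Finset (Fin n × Fin n)}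
    (hM : IsMatching n M) {k : ℕ} (hk : M.card = k) : wSum n w M ≤ maxAssign n w k :=
  le_csSup (mset_bddAbove n w k) ⟨M, hM, hk, rfl⟩

end Stmt1Aux

/-- the sequence of maximal weights of k-cardinality matchings in a weighted
`K_{n,n}` is concave. -/
theorem stmt1 (n : ℕ) (w : Fin n → Fin n → ℝ) (k : ℕ) (h1 : 1 ≤ k) (h2 : k + 1 ≤ n) :
    maxAssign n w k ≥ (maxAssign n w (k - 1) + maxAssign n w (k + 1)) / 2 := by
  open Stmt1Aux in
  have key : maxAssign n w (k - 1) + maxAssign n w (k + 1) ≤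
      maxAssign n w k + maxAssign n w k := by
    rw [maxAssign_eq n w (k-1)]
    rw [show maxAssign n w k + maxAssign n w k =
      (maxAssign n w k + maxAssign n w k - maxAssign n w (k+1)) + maxAssign n w (k+1) by ring]
    apply add_le_add_left
    apply csSup_le (mset_nonempty n w (by omega : k - 1 ≤ n))
    rintro x ⟨A, hA, hAcard, rfl⟩
    rw [show (wSum n w A : ℝ) = maxAssign n w k + maxAssign n w k -
      (maxAssign n w k + maxAssign n w k - wSum n w A) by ring]
    apply sub_le_sub_left
    rw [maxAssign_eq n w (k+1)]
    apply csSup_le (mset_nonempty n w h2)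
    rintro x ⟨B, hB, hBcard, rfl⟩
    obtain ⟨C, D, hC, hD, hCcard, hDcard, hsum⟩ :=
      Stmt1Aux.exchange A.card A B rfl hA hB (by omega)
    have := wsum_of_val_eq w hsum
    have hCle := wSum_le_maxAssign w hC (k := k) (by omega)
    have hDle := wSum_le_maxAssign w hD (k := k) (by omega)
    linarith
  linarith
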